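/- If the norms ‖·‖_p and ‖·‖_{w,p} are equivalent on c₀₀(E), then the closure of c₀₀(E) in ℓ_p(E) equals ℓ_p(E), the closure of c₀₀(E) in ℓ_p^u(E) equals ℓ_p^u(E), and consequently ℓ_p(E) = ℓ_p^u(E). -/

import Mathlib

open Filter

noncomputable section

section Defs

variable {E : Type*}

/-- `x ∈ ℓ_p(E)`: absolutely `p`-summable sequences. -/
def MemLpSeq [NormedAddCommGroup E] (p : ℝ) (x : ℕ → E) : Prop :=
  Summable fun j => ‖x j‖ ^ p

/-- The `ℓ_p` norm `(Σ ‖x j‖^p)^(1/p)`. -/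
def lpNorm [NormedAddCommGroup E] (p : ℝ) (x : ℕ → E) : ℝ :=
  (∑' j, ‖x j‖ ^ p) ^ (1 / p)

/-- `x ∈ ℓ_p^w(E)`: weakly `p`-summable sequences. -/
def WSummable [NormedAddCommGroup E] [NormedSpace ℝ E] (p : ℝ) (x : ℕ → E) : Prop :=
  ∀ f : E →L[ℝ] ℝ, Summable fun j => |f (x j)| ^ p

/-- The weak `ℓ_p` norm `sup_{‖f‖ ≤ 1} (Σ |f (x j)|^p)^(1/p)`. -/
def wNorm [NormedAddCommGroup E] [NormedSpace ℝ E] (p : ℝ) (x : ℕ → E) : ℝ :=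
  ⨆ f : {f : E →L[ℝ] ℝ // ‖f‖ ≤ 1}, (∑' j, |f.1 (x j)| ^ p) ^ (1 / p)

/-- `x ∈ ℓ_p^{mid}(E)`: mid `p`-summable sequences. -/
def MidSummable [NormedAddCommGroup E] [NormedSpace ℝ E] (p : ℝ) (x : ℕ → E) : Prop :=
  WSummable p x ∧ ∀ xs : ℕ → E →L[ℝ] ℝ, WSummable p xs →
    Summable fun nj : ℕ × ℕ => |xs nj.1 (x nj.2)| ^ p

/-- The mid `ℓ_p` norm: sup over the unit ball of `ℓ_p^w(E*)` of the double `ℓ_p` sum. -/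
def midNorm [NormedAddCommGroup E] [NormedSpace ℝ E] (p : ℝ) (x : ℕ → E) : ℝ :=
  ⨆ xs : {xs : ℕ → E →L[ℝ] ℝ // WSummable p xs ∧ wNorm p xs ≤ 1},
    (∑' nj : ℕ × ℕ, |xs.1 nj.1 (x nj.2)| ^ p) ^ (1 / p)

/-- `x ∈ ℓ_p^u(E)`: unconditionally `p`-summable sequences (weak norms of tails tend to 0). -/
def USummable [NormedAddCommGroup E] [NormedSpace ℝ E] (p : ℝ) (x : ℕ → E) : Prop :=
  WSummable p x ∧ Tendsto (fun k => wNorm p fun j => x (j + k)) atTop (nhds 0)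

/-- `x ∈ c₀₀(E)`: finitely supported sequences. -/
def FinSupp [Zero E] (x : ℕ → E) : Prop := ∃ N, ∀ j ≥ N, x j = 0

/-- Truncation of a sequence at index `k`. -/
def trunc [Zero E] (k : ℕ) (x : ℕ → E) : ℕ → E := fun j => if j < k then x j else 0

end Defs
section Helpers

open Finset

variable {E : Type*} [NormedAddCommGroup E] [NormedSpace ℝ E]

private lemma tsum_abs_nonneg (p : ℝ) (g : ℕ → ℝ) : (0:ℝ) ≤ ∑' j, |g j| ^ p :=
  tsum_nonneg fun j => Real.rpow_nonneg (abs_nonneg _) _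

private lemma wNorm_nonneg' (p : ℝ) (x : ℕ → E) : 0 ≤ wNorm p x :=
  Real.iSup_nonneg fun f => Real.rpow_nonneg (tsum_abs_nonneg p _) _

private lemma wNorm_le' {p : ℝ} {x : ℕ → E} {M : ℝ} (hM : 0 ≤ M)
    (h : ∀ f : E →L[ℝ] ℝ, ‖f‖ ≤ 1 → (∑' j, |f (x j)| ^ p) ^ (1 / p) ≤ M) :
    wNorm p x ≤ M :=
  Real.iSup_le (fun f => h f.1 f.2) hM

private lemma bdd_range {p : ℝ} {x : ℕ → E} {C : ℝ}
    (h : ∀ f : E →L[ℝ] ℝ, ‖f‖ ≤ 1 → (∑' j, |f (x j)| ^ p) ^ (1 / p) ≤ C) :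
    BddAbove (Set.range fun f : {f : E →L[ℝ] ℝ // ‖f‖ ≤ 1} =>
      (∑' j, |f.1 (x j)| ^ p) ^ (1 / p)) :=
  ⟨C, by rintro _ ⟨f, rfl⟩; exact h f.1 f.2⟩

private lemma le_wNorm {p : ℝ} {x : ℕ → E}
    (hb : BddAbove (Set.range fun f : {f : E →L[ℝ] ℝ // ‖f‖ ≤ 1} =>
      (∑' j, |f.1 (x j)| ^ p) ^ (1 / p)))
    {f : E →L[ℝ] ℝ} (hf : ‖f‖ ≤ 1) :
    (∑' j, |f (x j)| ^ p) ^ (1 / p) ≤ wNorm p x := by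
  unfold wNorm
  exact le_ciSup hb ⟨f, hf⟩

private lemma tsum_shift' {g : ℕ → ℝ} (hg : Summable g) {k : ℕ} (h0 : ∀ j < k, g j = 0) :
    ∑' j, g j = ∑' j, g (j + k) := by
  rw [← Summable.sum_add_tsum_nat_add k hg,
    Finset.sum_eq_zero (fun j hj => h0 j (Finset.mem_range.mp hj)), zero_add]

private lemma abs_apply_le {f : E →L[ℝ] ℝ} (hf : ‖f‖ ≤ 1) (u : E) : |f u| ≤ ‖u‖ := by
  have h1 := f.le_opNorm u
  rw [Real.norm_eq_abs] at h1
  calc |f u| ≤ ‖f‖ * ‖u‖ := h1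
    _ ≤ 1 * ‖u‖ := mul_le_mul_of_nonneg_right hf (norm_nonneg u)
    _ = ‖u‖ := one_mul _

private lemma trunc_finSupp (k : ℕ) (x : ℕ → E) : FinSupp (trunc k x) :=
  ⟨k, fun j hj => by simp only [trunc, if_neg (by omega : ¬ j < k)]⟩

private lemma tsum_of_trunc {p : ℝ} (hp0 : p ≠ 0) (f : E →L[ℝ] ℝ) (y : ℕ → E) (n : ℕ) :
    ∑' j, |f (trunc n y j)| ^ p = ∑ j ∈ Finset.range n, |f (y j)| ^ p := by
  rw [tsum_eq_sum (s := Finset.range n)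
    (fun j hj => by
      simp only [trunc, if_neg (fun h => hj (Finset.mem_range.mpr h))]
      simp [Real.zero_rpow hp0])]
  exact Finset.sum_congr rfl fun j hj => by
    simp only [trunc, if_pos (Finset.mem_range.mp hj)]

private lemma tsum_norm_trunc {p : ℝ} (hp0 : p ≠ 0) (y : ℕ → E) (n : ℕ) :
    ∑' j, ‖trunc n y j‖ ^ p = ∑ j ∈ Finset.range n, ‖y j‖ ^ p := by
  rw [tsum_eq_sum (s := Finset.range n)
    (fun j hj => by
      simp only [trunc, if_neg (fun h => hj (Finset.mem_range.mpr h))]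
      simp [Real.zero_rpow hp0])]
  exact Finset.sum_congr rfl fun j hj => by
    simp only [trunc, if_pos (Finset.mem_range.mp hj)]

private lemma lpNorm_trunc {p : ℝ} (hp0 : p ≠ 0) (y : ℕ → E) (n : ℕ) :
    lpNorm p (trunc n y) = (∑ j ∈ Finset.range n, ‖y j‖ ^ p) ^ (1 / p) := by
  unfold lpNorm
  rw [tsum_norm_trunc hp0]

private lemma trunc_val_bound {p : ℝ} (hp : 1 ≤ p) (y : ℕ → E) (n : ℕ) :
    ∀ f : E →L[ℝ] ℝ, ‖f‖ ≤ 1 →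
      (∑' j, |f (trunc n y j)| ^ p) ^ (1 / p) ≤ (∑ j ∈ Finset.range n, ‖y j‖ ^ p) ^ (1 / p) := by
  intro f hf
  have hp0 : (0:ℝ) < p := lt_of_lt_of_le one_pos hp
  rw [tsum_of_trunc (ne_of_gt hp0) f y n]
  apply Real.rpow_le_rpow (Finset.sum_nonneg fun j _ => Real.rpow_nonneg (abs_nonneg _) _)
    ?_ (one_div_pos.mpr hp0).le
  exact Finset.sum_le_sum fun j _ =>
    Real.rpow_le_rpow (abs_nonneg _) (abs_apply_le hf _) hp0.le

private lemma sign_aux {p : ℝ} (hp : 1 ≤ p) (t : ℝ) :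
    Real.sign t * |t| ^ (p - 1) * t = |t| ^ p := by
  have hp0 : p ≠ 0 := by intro h; rw [h] at hp; linarith
  rcases lt_trichotomy t 0 with h | h | h
  · have ht : |t| ≠ 0 := by simp [abs_eq_zero]; exact h.ne
    have hpe : p - 1 + 1 = p := by ring
    have key := Real.rpow_add_one ht (p - 1)
    rw [hpe] at key
    rw [key, Real.sign_of_neg h, abs_of_neg h]
    ring
  · subst h
    simp [Real.sign_zero, Real.zero_rpow hp0]
  · have ht : |t| ≠ 0 := by simp [abs_eq_zero]; exact h.ne'
    have hpe : p - 1 + 1 = p := by ring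
    have key := Real.rpow_add_one ht (p - 1)
    rw [hpe] at key
    rw [key, Real.sign_of_pos h, abs_of_pos h]
    ring

private lemma abs_sign_le_one (t : ℝ) : |Real.sign t| ≤ 1 := by
  rcases Real.sign_apply_eq t with h | h | h <;> rw [h] <;> norm_num

end Helpers

section CC

open Finset

/-- Coefficients of the optimal Hölder dual vector. -/
private def cc (p : ℝ) (a : ℕ → ℝ) (n : ℕ) (j : ℕ) : ℝ :=
  Real.sign (a j) * |a j| ^ (p - 1) / (∑ i ∈ Finset.range n, |a i| ^ p) ^ ((p - 1) / p)

private lemma holder_aux {p : ℝ} (hp : 1 ≤ p) (n : ℕ) (a g : ℕ → ℝ)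
    (hS : 0 < ∑ i ∈ Finset.range n, |a i| ^ p) :
    ∑ j ∈ Finset.range n, |cc p a n j| * |g j|
      ≤ (∑ j ∈ Finset.range n, |g j| ^ p) ^ (1 / p) := by
  have hp0 : (0:ℝ) < p := lt_of_lt_of_le one_pos hp
  set S := ∑ i ∈ Finset.range n, |a i| ^ p with hSdef
  have hT : 0 < S ^ ((p - 1) / p) := Real.rpow_pos_of_pos hS _
  have hcabs : ∀ j, |cc p a n j| ≤ |a j| ^ (p - 1) / S ^ ((p - 1) / p) := by
    intro j
    unfold cc
    rw [← hSdef, abs_div, abs_of_pos hT, abs_mul,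
      abs_of_nonneg (Real.rpow_nonneg (abs_nonneg (a j)) _)]
    have hX : (0:ℝ) ≤ |a j| ^ (p - 1) := Real.rpow_nonneg (abs_nonneg _) _
    have h1 := mul_le_mul_of_nonneg_right (abs_sign_le_one (a j)) hX
    rw [one_mul] at h1
    rw [div_eq_mul_inv, div_eq_mul_inv]
    exact mul_le_mul_of_nonneg_right h1 (inv_nonneg.mpr hT.le)
  rcases eq_or_lt_of_le hp with hp1 | hp1
  · -- p = 1
    have hc1 : ∀ j, |cc p a n j| ≤ 1 := by
      intro j
      refine (hcabs j).trans ?_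
      rw [← hp1]
      norm_num
    calc ∑ j ∈ Finset.range n, |cc p a n j| * |g j|
        ≤ ∑ j ∈ Finset.range n, |g j| :=
          Finset.sum_le_sum fun j _ => mul_le_of_le_one_left (abs_nonneg _) (hc1 j)
      _ = (∑ j ∈ Finset.range n, |g j| ^ p) ^ (1 / p) := by
          rw [← hp1]
          norm_num
  · -- 1 < p
    have hpq : p.HolderConjugate (p / (p - 1)) := Real.HolderConjugate.conjExponent hp1
    set q := p / (p - 1) with hqdef
    have hq0 : 0 < q := hpq.symm.pos
    have key := Real.inner_le_Lp_mul_Lq (Finset.range n)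
      (fun j => |cc p a n j|) (fun j => |g j|) hpq.symm
    simp only [abs_abs] at key
    refine key.trans ?_
    have hterm : ∀ j ∈ Finset.range n, |cc p a n j| ^ q ≤ |a j| ^ p / S := by
      intro j _
      calc |cc p a n j| ^ q ≤ (|a j| ^ (p - 1) / S ^ ((p - 1) / p)) ^ q :=
            Real.rpow_le_rpow (abs_nonneg _) (hcabs j) hq0.le
        _ = (|a j| ^ (p - 1)) ^ q / (S ^ ((p - 1) / p)) ^ q :=
            Real.div_rpow (Real.rpow_nonneg (abs_nonneg _) _) (Real.rpow_nonneg hS.le _) q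
        _ = |a j| ^ p / S := by
            rw [← Real.rpow_mul (abs_nonneg _), ← Real.rpow_mul hS.le]
            congr 1
            · rw [hpq.sub_one_mul_conj]
            · rw [show (p - 1) / p * q = 1 by
                rw [div_mul_eq_mul_div, hpq.sub_one_mul_conj, div_self (ne_of_gt hp0)],
                Real.rpow_one]
    have hfac : (∑ j ∈ Finset.range n, |cc p a n j| ^ q) ≤ 1 := by
      calc ∑ j ∈ Finset.range n, |cc p a n j| ^ q
          ≤ ∑ j ∈ Finset.range n, |a j| ^ p / S := Finset.sum_le_sum hterm
        _ = 1 := by rw [← Finset.sum_div, ← hSdef]; exact div_self (ne_of_gt hS)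
    have hgs : (0:ℝ) ≤ (∑ j ∈ Finset.range n, |g j| ^ p) ^ (1 / p) :=
      Real.rpow_nonneg (Finset.sum_nonneg fun j _ => Real.rpow_nonneg (abs_nonneg _) _) _
    calc (∑ j ∈ Finset.range n, |cc p a n j| ^ q) ^ (1 / q)
          * (∑ j ∈ Finset.range n, |g j| ^ p) ^ (1 / p)
        ≤ 1 * (∑ j ∈ Finset.range n, |g j| ^ p) ^ (1 / p) := by
          apply mul_le_mul_of_nonneg_right ?_ hgs
          exact Real.rpow_le_one
            (Finset.sum_nonneg fun j _ => Real.rpow_nonneg (abs_nonneg _) _) hfac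
            (one_div_pos.mpr hq0).le
      _ = _ := one_mul _

variable {E : Type*} [NormedAddCommGroup E] [NormedSpace ℝ E]

private def vv (p : ℝ) (x : ℕ → E) (f : E →L[ℝ] ℝ) (n : ℕ) : E :=
  ∑ j ∈ Finset.range n, cc p (fun i => f (x i)) n j • x j

private lemma apply_vv (p : ℝ) (x : ℕ → E) (g f : E →L[ℝ] ℝ) (n : ℕ) :
    g (vv p x f n) = ∑ j ∈ Finset.range n, cc p (fun i => f (x i)) n j * g (x j) := by
  unfold vv
  rw [map_sum]
  exact Finset.sum_congr rfl fun j _ => by rw [map_smul, smul_eq_mul]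

private lemma vv_bound {p : ℝ} (hp : 1 ≤ p) {x : ℕ → E} (hx : WSummable p x)
    (g f : E →L[ℝ] ℝ) (n : ℕ) :
    |g (vv p x f n)| ≤ (∑' j, |g (x j)| ^ p) ^ (1 / p) := by
  have hp0 : (0:ℝ) < p := lt_of_lt_of_le one_pos hp
  have hrhs : (0:ℝ) ≤ (∑' j, |g (x j)| ^ p) ^ (1 / p) :=
    Real.rpow_nonneg (tsum_abs_nonneg p _) _
  have hSnn : (0:ℝ) ≤ ∑ i ∈ Finset.range n, |f (x i)| ^ p :=
    Finset.sum_nonneg fun i _ => Real.rpow_nonneg (abs_nonneg _) _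
  rcases eq_or_lt_of_le hSnn with hS | hS
  · have hz : ∀ j ∈ Finset.range n, cc p (fun i => f (x i)) n j = 0 := by
      intro j hj
      have h1 : |f (x j)| ^ p = 0 := by
        by_contra hne
        have h2 : 0 < |f (x j)| ^ p :=
          lt_of_le_of_ne (Real.rpow_nonneg (abs_nonneg _) _) (Ne.symm hne)
        have h3 : 0 < ∑ i ∈ Finset.range n, |f (x i)| ^ p :=
          Finset.sum_pos' (fun i _ => Real.rpow_nonneg (abs_nonneg _) _) ⟨j, hj, h2⟩
        exact absurd hS.symm (ne_of_gt h3)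
      have h4 : f (x j) = 0 :=
        abs_eq_zero.mp (((Real.rpow_eq_zero_iff_of_nonneg (abs_nonneg _)).mp h1).1)
      simp [cc, h4, Real.sign_zero]
    have hvv : vv p x f n = 0 := by
      unfold vv
      exact Finset.sum_eq_zero fun j hj => by rw [hz j hj, zero_smul]
    rw [hvv, map_zero, abs_zero]
    exact hrhs
  · calc |g (vv p x f n)|
        ≤ ∑ j ∈ Finset.range n, |cc p (fun i => f (x i)) n j * g (x j)| := by
          rw [apply_vv]; exact Finset.abs_sum_le_sum_abs _ _
      _ = ∑ j ∈ Finset.range n, |cc p (fun i => f (x i)) n j| * |g (x j)| :=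
          Finset.sum_congr rfl fun j _ => abs_mul _ _
      _ ≤ (∑ j ∈ Finset.range n, |g (x j)| ^ p) ^ (1 / p) := holder_aux hp n _ _ hS
      _ ≤ (∑' j, |g (x j)| ^ p) ^ (1 / p) :=
          Real.rpow_le_rpow
            (Finset.sum_nonneg fun j _ => Real.rpow_nonneg (abs_nonneg _) _)
            (Summable.sum_le_tsum _ (fun j _ => Real.rpow_nonneg (abs_nonneg _) _) (hx g))
            (one_div_pos.mpr hp0).le

private lemma vv_diag {p : ℝ} (hp : 1 ≤ p) (x : ℕ → E) (f : E →L[ℝ] ℝ) (n : ℕ)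
    (hS : 0 < ∑ i ∈ Finset.range n, |f (x i)| ^ p) :
    f (vv p x f n) = (∑ i ∈ Finset.range n, |f (x i)| ^ p) ^ (1 / p) := by
  have hp0 : (0:ℝ) < p := lt_of_lt_of_le one_pos hp
  rw [apply_vv]
  have e1 : ∀ j ∈ Finset.range n, cc p (fun i => f (x i)) n j * f (x j)
      = |f (x j)| ^ p / (∑ i ∈ Finset.range n, |f (x i)| ^ p) ^ ((p - 1) / p) := by
    intro j _
    unfold cc
    rw [div_mul_eq_mul_div, sign_aux hp (f (x j))]
  rw [Finset.sum_congr rfl e1, ← Finset.sum_div]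
  have e2 : (1:ℝ) - (p - 1) / p = 1 / p := by
    field_simp
    ring
  have e3 : (∑ i ∈ Finset.range n, |f (x i)| ^ p)
        / (∑ i ∈ Finset.range n, |f (x i)| ^ p) ^ ((p - 1) / p)
      = (∑ i ∈ Finset.range n, |f (x i)| ^ p) ^ ((1:ℝ) / p) := by
    rw [← e2, Real.rpow_sub hS, Real.rpow_one]
  exact e3

private lemma bigBound [CompleteSpace E] {p : ℝ} (hp : 1 ≤ p) {x : ℕ → E}
    (hx : WSummable p x) :
    ∃ C : ℝ, 0 ≤ C ∧ ∀ f : E →L[ℝ] ℝ, ‖f‖ ≤ 1 → (∑' j, |f (x j)| ^ p) ≤ C := by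
  have hp0 : (0:ℝ) < p := lt_of_lt_of_le one_pos hp
  obtain ⟨C', hC'⟩ := banach_steinhaus
    (g := fun i : ℕ × (E →L[ℝ] ℝ) => NormedSpace.inclusionInDoubleDual ℝ E (vv p x i.2 i.1))
    (fun φ => ⟨(∑' j, |φ (x j)| ^ p) ^ (1 / p), fun i => by
      simpa [NormedSpace.dual_def, Real.norm_eq_abs] using vv_bound hp hx φ i.2 i.1⟩)
  refine ⟨(max C' 0) ^ p, Real.rpow_nonneg (le_max_right _ _) _, fun f hf => ?_⟩
  apply Real.tsum_le_of_sum_range_le (fun j => Real.rpow_nonneg (abs_nonneg _) _)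
  intro n
  have hSnn : (0:ℝ) ≤ ∑ i ∈ Finset.range n, |f (x i)| ^ p :=
    Finset.sum_nonneg fun i _ => Real.rpow_nonneg (abs_nonneg _) _
  rcases eq_or_lt_of_le hSnn with hS | hS
  · rw [← hS]
    exact Real.rpow_nonneg (le_max_right _ _) _
  · have h1 : (∑ i ∈ Finset.range n, |f (x i)| ^ p) ^ (1 / p) ≤ max C' 0 := by
      rw [← vv_diag hp x f n hS]
      calc f (vv p x f n) ≤ |f (vv p x f n)| := le_abs_self _
        _ = ‖(NormedSpace.inclusionInDoubleDual ℝ E (vv p x f n)) f‖ := by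
            rw [NormedSpace.dual_def, Real.norm_eq_abs]
        _ ≤ ‖NormedSpace.inclusionInDoubleDual ℝ E (vv p x f n)‖ * ‖f‖ :=
            ContinuousLinearMap.le_opNorm _ _
        _ ≤ C' * 1 :=
            mul_le_mul (hC' (n, f)) hf (norm_nonneg _) ((norm_nonneg _).trans (hC' (n, f)))
        _ ≤ max C' 0 := by simp
    have h2 := Real.rpow_le_rpow (Real.rpow_nonneg hSnn _) h1 hp0.le
    rwa [← Real.rpow_mul hSnn, one_div_mul_cancel (ne_of_gt hp0), Real.rpow_one] at h2

end CC

/-- if the norms `‖·‖_p` and `‖·‖_{w,p}` are equivalent on `c₀₀(E)`, then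
`c₀₀(E)` is dense in `ℓ_p(E)` and in `ℓ_p^u(E)` (each with its own norm), and
consequently `ℓ_p(E) = ℓ_p^u(E)`. -/
theorem stmt_2 {E : Type*} [NormedAddCommGroup E] [NormedSpace ℝ E] [CompleteSpace E]
    (p : ℝ) (hp : 1 ≤ p)
    (hequiv : ∃ a b : ℝ, 0 < a ∧ 0 < b ∧ ∀ x : ℕ → E, FinSupp x →
      a * wNorm p x ≤ lpNorm p x ∧ lpNorm p x ≤ b * wNorm p x) :
    (∀ x : ℕ → E, MemLpSeq p x → ∀ ε > 0, ∃ y : ℕ → E, FinSupp y ∧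
        lpNorm p (fun j => x j - y j) < ε) ∧
    (∀ x : ℕ → E, USummable p x → ∀ ε > 0, ∃ y : ℕ → E, FinSupp y ∧
        wNorm p (fun j => x j - y j) < ε) ∧
    (∀ x : ℕ → E, MemLpSeq p x ↔ USummable p x) := by
  obtain ⟨a, b, ha, hb, hab⟩ := hequiv
  have hp0 : (0:ℝ) < p := lt_of_lt_of_le one_pos hp
  have hp0' : p ≠ 0 := ne_of_gt hp0
  have hip : (0:ℝ) < 1 / p := one_div_pos.mpr hp0
  -- Part 1 : density in ℓ_p
  have part1 : ∀ x : ℕ → E, MemLpSeq p x → ∀ ε > 0, ∃ y : ℕ → E, FinSupp y ∧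
      lpNorm p (fun j => x j - y j) < ε := by
    intro x hx ε hε
    have hxs : Summable fun j => ‖x j‖ ^ p := hx
    have htail : Tendsto (fun k => ∑' j, ‖x (j + k)‖ ^ p) atTop (nhds 0) :=
      tendsto_sum_nat_add (fun j => ‖x j‖ ^ p)
    have hεp : 0 < ε ^ p := Real.rpow_pos_of_pos hε p
    obtain ⟨k, hk⟩ := (htail.eventually (gt_mem_nhds hεp)).exists
    refine ⟨trunc k x, trunc_finSupp k x, ?_⟩
    have hsum0 : Summable fun j => if j < k then (0:ℝ) else ‖x j‖ ^ p := by
      apply Summable.of_nonneg_of_le (fun j => ?_) (fun j => ?_) hxs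
      · by_cases h : j < k <;> simp [h, Real.rpow_nonneg (norm_nonneg _) p]
      · by_cases h : j < k <;> simp [h, Real.rpow_nonneg (norm_nonneg _) p]
    have heq : (∑' j, ‖x j - trunc k x j‖ ^ p) = ∑' j, ‖x (j + k)‖ ^ p := by
      calc (∑' j, ‖x j - trunc k x j‖ ^ p)
          = ∑' j, (if j < k then (0:ℝ) else ‖x j‖ ^ p) := by
            apply tsum_congr
            intro j
            by_cases h : j < k <;> simp [trunc, h, Real.zero_rpow hp0']
        _ = ∑' j, (if j + k < k then (0:ℝ) else ‖x (j + k)‖ ^ p) :=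
            tsum_shift' hsum0 (fun j hj => by simp [hj])
        _ = ∑' j, ‖x (j + k)‖ ^ p := by
            apply tsum_congr
            intro j
            simp [Nat.not_lt.mpr (Nat.le_add_left k j)]
    unfold lpNorm
    rw [heq]
    calc (∑' j, ‖x (j + k)‖ ^ p) ^ (1 / p)
        < (ε ^ p) ^ (1 / p) :=
          Real.rpow_lt_rpow (tsum_nonneg fun j => Real.rpow_nonneg (norm_nonneg _) _) hk hip
      _ = ε := by
          rw [← Real.rpow_mul hε.le, mul_one_div_cancel hp0', Real.rpow_one]
  -- Part 2 : density in ℓ_p^u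
  have part2 : ∀ x : ℕ → E, USummable p x → ∀ ε > 0, ∃ y : ℕ → E, FinSupp y ∧
      wNorm p (fun j => x j - y j) < ε := by
    intro x hx ε hε
    obtain ⟨k, hk⟩ := (hx.2.eventually (gt_mem_nhds hε)).exists
    refine ⟨trunc k x, trunc_finSupp k x, ?_⟩
    have hweq : wNorm p (fun j => x j - trunc k x j) = wNorm p (fun j => x (j + k)) := by
      unfold wNorm
      apply iSup_congr
      intro f
      congr 1
      have hsum0 : Summable fun j => |f.1 (if j < k then (0:E) else x j)| ^ p := by
        apply Summable.of_nonneg_of_le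
          (fun j => Real.rpow_nonneg (abs_nonneg _) _) (fun j => ?_) (hx.1 f.1)
        by_cases h : j < k <;>
          simp [h, Real.zero_rpow hp0', Real.rpow_nonneg (abs_nonneg _) p]
      calc ∑' j, |f.1 (x j - trunc k x j)| ^ p
          = ∑' j, |f.1 (if j < k then (0:E) else x j)| ^ p := by
            apply tsum_congr
            intro j
            by_cases h : j < k <;> simp [trunc, h]
        _ = ∑' j, |f.1 (if j + k < k then (0:E) else x (j + k))| ^ p :=
            tsum_shift' hsum0 (fun j hj => by simp [hj, Real.zero_rpow hp0'])
        _ = ∑' j, |f.1 (x (j + k))| ^ p := by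
            apply tsum_congr
            intro j
            simp [Nat.not_lt.mpr (Nat.le_add_left k j)]
    rw [hweq]
    exact hk
  -- Forward : ℓ_p ⊆ ℓ_p^u
  have fwd : ∀ x : ℕ → E, MemLpSeq p x → USummable p x := by
    intro x hx
    have hxs : Summable fun j => ‖x j‖ ^ p := hx
    constructor
    · intro f
      apply Summable.of_nonneg_of_le (fun j => Real.rpow_nonneg (abs_nonneg _) _)
        (fun j => ?_) (hxs.mul_left (‖f‖ ^ p))
      calc |f (x j)| ^ p ≤ (‖f‖ * ‖x j‖) ^ p := by
            apply Real.rpow_le_rpow (abs_nonneg _) ?_ hp0.le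
            rw [← Real.norm_eq_abs]
            exact f.le_opNorm _
        _ = ‖f‖ ^ p * ‖x j‖ ^ p := Real.mul_rpow (norm_nonneg _) (norm_nonneg _)
    · apply squeeze_zero (g := fun k => (1 / a) * (∑' j, ‖x (j + k)‖ ^ p) ^ (1 / p))
        (fun k => wNorm_nonneg' p _) ?_ ?_
      · intro k
        have htails : Summable fun j => ‖x (j + k)‖ ^ p :=
          hxs.comp_injective (add_left_injective k)
        have hT0 : (0:ℝ) ≤ (∑' j, ‖x (j + k)‖ ^ p) ^ (1 / p) :=
          Real.rpow_nonneg (tsum_nonneg fun j => Real.rpow_nonneg (norm_nonneg _) _) _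
        apply wNorm_le' (by positivity)
        intro f hf
        have key : ∀ n, ∑ j ∈ Finset.range n, |f (x (j + k))| ^ p
            ≤ ((1 / a) * (∑' j, ‖x (j + k)‖ ^ p) ^ (1 / p)) ^ p := by
          intro n
          have hA : (0:ℝ) ≤ ∑ j ∈ Finset.range n, |f (x (j + k))| ^ p :=
            Finset.sum_nonneg fun j _ => Real.rpow_nonneg (abs_nonneg _) _
          have h1 : (∑ j ∈ Finset.range n, |f (x (j + k))| ^ p) ^ (1 / p)
              ≤ (1 / a) * (∑' j, ‖x (j + k)‖ ^ p) ^ (1 / p) := by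
            have e1 : (∑ j ∈ Finset.range n, |f (x (j + k))| ^ p) ^ (1 / p)
                = (∑' j, |f (trunc n (fun i => x (i + k)) j)| ^ p) ^ (1 / p) := by
              rw [tsum_of_trunc hp0' f _ n]
            rw [e1]
            have hbd := bdd_range (trunc_val_bound hp (fun i => x (i + k)) n)
            calc (∑' j, |f (trunc n (fun i => x (i + k)) j)| ^ p) ^ (1 / p)
                ≤ wNorm p (trunc n fun i => x (i + k)) := le_wNorm hbd hf
              _ ≤ (1 / a) * lpNorm p (trunc n fun i => x (i + k)) := by
                  have h2 := (hab _ (trunc_finSupp n fun i => x (i + k))).1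
                  rw [show (1 / a) * lpNorm p (trunc n fun i => x (i + k))
                      = lpNorm p (trunc n fun i => x (i + k)) / a by ring,
                    le_div_iff₀ ha, mul_comm]
                  exact h2
              _ ≤ (1 / a) * (∑' j, ‖x (j + k)‖ ^ p) ^ (1 / p) := by
                  apply mul_le_mul_of_nonneg_left ?_ (by positivity)
                  rw [lpNorm_trunc hp0']
                  exact Real.rpow_le_rpow
                    (Finset.sum_nonneg fun j _ => Real.rpow_nonneg (norm_nonneg _) _)
                    (Summable.sum_le_tsum _ (fun j _ => Real.rpow_nonneg (norm_nonneg _) _) htails)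
                    hip.le
          have h2 := Real.rpow_le_rpow (Real.rpow_nonneg hA _) h1 hp0.le
          rwa [← Real.rpow_mul hA, one_div_mul_cancel hp0', Real.rpow_one] at h2
        have h3 := Real.tsum_le_of_sum_range_le
          (fun j => Real.rpow_nonneg (abs_nonneg _) _) key
        calc (∑' j, |f (x (j + k))| ^ p) ^ (1 / p)
            ≤ (((1 / a) * (∑' j, ‖x (j + k)‖ ^ p) ^ (1 / p)) ^ p) ^ (1 / p) :=
              Real.rpow_le_rpow (tsum_abs_nonneg p _) h3 hip.le
          _ = (1 / a) * (∑' j, ‖x (j + k)‖ ^ p) ^ (1 / p) := by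
              rw [← Real.rpow_mul (by positivity), mul_one_div_cancel hp0', Real.rpow_one]
      · have h0 : Tendsto (fun k => (∑' j, ‖x (j + k)‖ ^ p) ^ (1 / p)) atTop (nhds 0) := by
          have h1 := (tendsto_sum_nat_add (fun j => ‖x j‖ ^ p)).rpow_const
            (Or.inr hip.le)
          simpa [Real.zero_rpow (ne_of_gt hip), Real.zero_rpow (inv_ne_zero hp0')] using h1
        simpa using h0.const_mul (1 / a)
  -- Backward : ℓ_p^u ⊆ ℓ_p
  have bwd : ∀ x : ℕ → E, USummable p x → MemLpSeq p x := by
    intro x hx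
    obtain ⟨hw, _⟩ := hx
    obtain ⟨C, hC0, hC⟩ := bigBound hp hw
    have hbdd : BddAbove (Set.range fun f : {f : E →L[ℝ] ℝ // ‖f‖ ≤ 1} =>
        (∑' j, |f.1 (x j)| ^ p) ^ (1 / p)) :=
      bdd_range (C := C ^ (1 / p)) (fun f hf =>
        Real.rpow_le_rpow (tsum_abs_nonneg p _) (hC f hf) hip.le)
    have hWnn : 0 ≤ wNorm p x := wNorm_nonneg' p x
    apply summable_of_sum_range_le (c := (b * wNorm p x) ^ p)
      (fun n => Real.rpow_nonneg (norm_nonneg _) _)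
    intro n
    have h1 : lpNorm p (trunc n x) ≤ b * wNorm p x := by
      calc lpNorm p (trunc n x) ≤ b * wNorm p (trunc n x) :=
            (hab _ (trunc_finSupp n x)).2
        _ ≤ b * wNorm p x := by
            apply mul_le_mul_of_nonneg_left ?_ hb.le
            apply wNorm_le' hWnn
            intro f hf
            rw [tsum_of_trunc hp0' f x n]
            calc (∑ j ∈ Finset.range n, |f (x j)| ^ p) ^ (1 / p)
                ≤ (∑' j, |f (x j)| ^ p) ^ (1 / p) :=
                  Real.rpow_le_rpow
                    (Finset.sum_nonneg fun j _ => Real.rpow_nonneg (abs_nonneg _) _)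
                    (Summable.sum_le_tsum _ (fun j _ => Real.rpow_nonneg (abs_nonneg _) _) (hw f))
                    hip.le
              _ ≤ wNorm p x := le_wNorm hbdd hf
    have hsnn : (0:ℝ) ≤ ∑ j ∈ Finset.range n, ‖x j‖ ^ p :=
      Finset.sum_nonneg fun j _ => Real.rpow_nonneg (norm_nonneg _) _
    have e : ∑ j ∈ Finset.range n, ‖x j‖ ^ p = (lpNorm p (trunc n x)) ^ p := by
      rw [lpNorm_trunc hp0', ← Real.rpow_mul hsnn, one_div_mul_cancel hp0', Real.rpow_one]
    rw [e]
    exact Real.rpow_le_rpow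
      (Real.rpow_nonneg (tsum_nonneg fun j => Real.rpow_nonneg (norm_nonneg _) _) _)
      h1 hp0.le
  exact ⟨part1, part2, fun x => ⟨fwd x, bwd x⟩⟩
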